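/- In the transductive Context-FTPL setup with linear losses, fix a sequence (x^1,ℓ^1),…,(x^T,ℓ^T) of contexts x^τ ∈ X and non-negative loss vectors ℓ^τ ∈ ℝ_{≥0}^K. For each t, with the same perturbation draw, let π^t (respectively π^{t+1}) be the smallest (tie-breaking order) minimizer over π ∈ Π of Σ_{τ=1}^{t−1} ⟨π(x^τ), ℓ^τ⟩ + Σ_{x ∈ X} ⟨π(x), ℓ_x⟩ (respectively the same sum including the term for τ = t). Then E[ ⟨π^t(x^t), ℓ^t⟩ − ⟨π^{t+1}(x^t), ℓ^t⟩ ] ≤ ε · E[ ⟨π^t(x^t), ℓ^t⟩² ], where expectations are over the i.i.d. Laplace(ε) perturbation. (Lemma: Multiplicative Stability for linear losses.) -/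

import Mathlib

open MeasureTheory Finset

/-- The i.i.d. product Laplace(ε) measure on `ι → ℝ`: density
`z ↦ ∏ i (ε/2)·exp(−ε|z i|)` with respect to Lebesgue measure. -/
noncomputable def laplacePi (ι : Type*) [Fintype ι] (ε : ℝ) :
    MeasureTheory.Measure (ι → ℝ) :=
  (MeasureTheory.volume : MeasureTheory.Measure (ι → ℝ)).withDensity
    fun z => ENNReal.ofReal (∏ i, ε / 2 * Real.exp (-ε * |z i|))

/-- `⟨a, v⟩` for `a ∈ {0,1}^K` (as a Boolean vector) and `v ∈ ℝ^K`. -/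
def dotp {K : ℕ} (a : Fin K → Bool) (v : Fin K → ℝ) : ℝ :=
  ∑ j, if a j then v j else 0

/-- The smallest (in the tie-breaking linear order) minimizer of `c` over the
finite nonempty policy set `P`. -/
noncomputable def argminTie {P : Type*} [Fintype P] [Nonempty P] [LinearOrder P]
    (c : P → ℝ) : P :=
  haveI := Classical.decPred fun p : P => ∀ q, c p ≤ c q
  (Finset.univ.filter fun p : P => ∀ q, c p ≤ c q).min' (by
    obtain ⟨p, -, hp⟩ := Finset.exists_min_image (Finset.univ : Finset P) c
      ⟨Classical.arbitrary P, Finset.mem_univ _⟩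
    exact ⟨p, Finset.mem_filter.mpr ⟨Finset.mem_univ _, fun q => hp q (Finset.mem_univ q)⟩⟩)

set_option linter.unusedSectionVars false
set_option linter.unusedVariables false

section OneDim
variable {ε : ℝ}

lemma integrable_laplace_real (hε : 0 < ε) :
    Integrable (fun x : ℝ => ε / 2 * Real.exp (-ε * |x|)) := by
  have hIoi : IntegrableOn (fun x : ℝ => Real.exp (-ε * |x|)) (Set.Ioi 0) := by
    refine (exp_neg_integrableOn_Ioi 0 hε).congr_fun (fun x hx => ?_) measurableSet_Ioi
    show Real.exp (-ε * x) = Real.exp (-ε * |x|)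
    rw [abs_of_pos hx]
  have hIic : IntegrableOn (fun x : ℝ => Real.exp (-ε * |x|)) (Set.Iic 0) := by
    rw [← Measure.map_neg_eq_self (volume : Measure ℝ)]
    have m : MeasurableEmbedding fun x : ℝ => -x := (Homeomorph.neg ℝ).measurableEmbedding
    rw [m.integrableOn_map_iff]
    simp_rw [Function.comp_def, abs_neg, Set.neg_preimage, Set.neg_Iic, neg_zero]
    exact Iff.mpr integrableOn_Ici_iff_integrableOn_Ioi hIoi
  have : Integrable (fun x : ℝ => Real.exp (-ε * |x|)) := by
    rw [← integrableOn_univ, ← Set.Iic_union_Ioi (a := (0:ℝ))]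
    exact hIic.union hIoi
  exact this.const_mul _

lemma integral_laplace_real (hε : 0 < ε) :
    ∫ x : ℝ, ε / 2 * Real.exp (-ε * |x|) = 1 := by
  have h0 : ∫ x in Set.Ioi (0:ℝ), Real.exp (-ε * x) = ε⁻¹ := by
    have h := integral_comp_mul_left_Ioi (fun y => Real.exp (-y)) 0 hε
    simp only [mul_zero, integral_exp_neg_Ioi_zero, smul_eq_mul, mul_one] at h
    rw [← h]
    congr 1; ext x; rw [neg_mul]
  rw [integral_comp_abs (f := fun y => ε / 2 * Real.exp (-ε * y))]
  rw [MeasureTheory.integral_const_mul, h0]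
  field_simp

end OneDim

section Pi

variable {ι : Type*} [Fintype ι] {ε : ℝ}

lemma measurable_laplaceDensity :
    Measurable (fun z : ι → ℝ => ENNReal.ofReal (∏ i, ε / 2 * Real.exp (-ε * |z i|))) := by
  fun_prop

lemma laplacePi_isProb (hε : 0 < ε) : IsProbabilityMeasure (laplacePi ι ε) := by
  constructor
  rw [laplacePi, withDensity_apply _ MeasurableSet.univ, Measure.restrict_univ]
  have hint : Integrable (fun z : ι → ℝ => ∏ i, ε / 2 * Real.exp (-ε * |z i|)) :=
    Integrable.fintype_prod (𝕜 := ℝ) (f := fun _ x => ε / 2 * Real.exp (-ε * |x|))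
      (fun _ => integrable_laplace_real hε)
  rw [← ofReal_integral_eq_lintegral_ofReal hint (by filter_upwards with z; positivity)]
  rw [MeasureTheory.integral_fintype_prod_volume_eq_prod (ι := ι) (fun _ x => ε / 2 * Real.exp (-ε * |x|))]
  simp only [integral_laplace_real hε, Finset.prod_const, one_pow, ENNReal.ofReal_one]

lemma density_shift_le (hε : 0 < ε) (e z : ι → ℝ) :
    Real.exp (-ε * ∑ i, |e i|) * ∏ i, ε / 2 * Real.exp (-ε * |z i + e i|) ≤
      ∏ i, ε / 2 * Real.exp (-ε * |z i|) := by
  have hexp : Real.exp (-ε * ∑ i, |e i|) = ∏ i, Real.exp (-ε * |e i|) := by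
    rw [← Real.exp_sum]
    congr 1
    rw [Finset.mul_sum]
  rw [hexp, ← Finset.prod_mul_distrib]
  refine Finset.prod_le_prod (fun i _ => by positivity) (fun i _ => ?_)
  rw [mul_comm (Real.exp (-ε * |e i|)), mul_assoc, ← Real.exp_add]
  refine mul_le_mul_of_nonneg_left (Real.exp_le_exp.2 ?_) (by positivity)
  have habs : |z i| ≤ |z i + e i| + |e i| := by
    simpa using abs_add_le (z i + e i) (-(e i))
  nlinarith [mul_le_mul_of_nonneg_left habs hε.le]

lemma laplacePi_shift (hε : 0 < ε) (e : ι → ℝ) {S : Set (ι → ℝ)} (hS : MeasurableSet S) :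
    ENNReal.ofReal (Real.exp (-ε * ∑ i, |e i|)) * laplacePi ι ε S ≤
      laplacePi ι ε ((fun z => z + e) ⁻¹' S) := by
  classical
  set D : (ι → ℝ) → ENNReal := fun z => ENNReal.ofReal (∏ i, ε / 2 * Real.exp (-ε * |z i|))
    with hD
  have hDm : Measurable D := measurable_laplaceDensity
  have hpre : MeasurableSet ((fun z : ι → ℝ => z + e) ⁻¹' S) :=
    hS.preimage (measurable_add_const e)
  rw [laplacePi, withDensity_apply _ hS, withDensity_apply _ hpre,
    ← lintegral_indicator hS D, ← lintegral_indicator hpre D,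
    ← lintegral_const_mul _ (hDm.indicator hS)]
  calc ∫⁻ z, ENNReal.ofReal (Real.exp (-ε * ∑ i, |e i|)) * S.indicator D z ∂volume
      = ∫⁻ z, ENNReal.ofReal (Real.exp (-ε * ∑ i, |e i|)) * S.indicator D (z + e) ∂volume := by
        exact (lintegral_add_right_eq_self
          (fun w => ENNReal.ofReal (Real.exp (-ε * ∑ i, |e i|)) * S.indicator D w) e).symm
    _ ≤ ∫⁻ z, ((fun z => z + e) ⁻¹' S).indicator D z ∂volume := by
        refine lintegral_mono fun z => ?_
        by_cases hz : z + e ∈ S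
        · rw [Set.indicator_of_mem hz, Set.indicator_of_mem (by exact hz)]
          rw [hD, ← ENNReal.ofReal_mul (Real.exp_nonneg _)]
          refine ENNReal.ofReal_le_ofReal ?_
          simpa [Pi.add_apply] using density_shift_le hε e z
        · rw [Set.indicator_of_notMem hz]
          simp

end Pi

section Argmin
variable {P : Type*} [Fintype P] [Nonempty P] [LinearOrder P]

lemma min'_eq_iff {S : Finset P} (h : S.Nonempty) (π : P) :
    S.min' h = π ↔ π ∈ S ∧ ∀ b ∈ S, π ≤ b := by
  constructor
  · intro he
    subst he
    exact ⟨S.min'_mem h, fun b hb => S.min'_le b hb⟩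
  · rintro ⟨h1, h2⟩
    exact le_antisymm (S.min'_le π h1) (h2 _ (S.min'_mem h))

lemma argminTie_eq_iff (c : P → ℝ) (π : P) :
    argminTie c = π ↔ (∀ q, c π ≤ c q) ∧ ∀ p, (∀ q, c p ≤ c q) → π ≤ p := by
  unfold argminTie
  rw [_root_.min'_eq_iff]
  simp only [Finset.mem_filter, Finset.mem_univ, true_and]

lemma argminTie_transfer (c c' : P → ℝ) (π : P)
    (hle : ∀ p, c p ≤ c' p) (heq : c' π = c π) (h : argminTie c = π) :
    argminTie c' = π := by
  rw [argminTie_eq_iff] at h ⊢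
  obtain ⟨h1, h2⟩ := h
  refine ⟨fun q => ?_, fun p hp => ?_⟩
  · rw [heq]
    exact (h1 q).trans (hle q)
  · exact h2 p fun q => (((hle p).trans (hp π)).trans heq.le).trans (h1 q)

lemma measurableSet_argminTie {α : Type*} [MeasurableSpace α]
    (g : P → α → ℝ) (hg : ∀ p, Measurable (g p)) (π : P) :
    MeasurableSet {z | argminTie (fun p => g p z) = π} := by
  classical
  have hset : {z | argminTie (fun p => g p z) = π} =
      (⋂ q, {z | g π z ≤ g q z}) ∩
        ⋂ p, {z | (∀ q, g p z ≤ g q z) → π ≤ p} := by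
    ext z
    simp only [Set.mem_setOf_eq, Set.mem_inter_iff, Set.mem_iInter, argminTie_eq_iff]
  rw [hset]
  refine MeasurableSet.inter (MeasurableSet.iInter fun q => measurableSet_le (hg π) (hg q))
    (MeasurableSet.iInter fun p => ?_)
  by_cases hπp : π ≤ p
  · have : {z | (∀ q, g p z ≤ g q z) → π ≤ p} = Set.univ := by
      ext z; simp [hπp]
    rw [this]; exact MeasurableSet.univ
  · have : {z | (∀ q, g p z ≤ g q z) → π ≤ p} = ⋃ q, {z | g q z < g p z} := by
      ext z
      simp only [Set.mem_setOf_eq, Set.mem_iUnion]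
      constructor
      · intro h
        by_contra hc
        push_neg at hc
        exact hπp (h fun q => le_of_not_gt fun hlt => (hc q).not_gt hlt)
      · rintro ⟨q, hq⟩ h
        exact absurd (h q) (not_le.mpr hq)
    rw [this]
    exact MeasurableSet.iUnion fun q => measurableSet_lt (hg q) (hg p)

lemma argmin_indicator {α : Type*} (g : P → α → ℝ) (w : P → ℝ) (z : α) :
    w (argminTie fun p => g p z) =
      ∑ π : P, Set.indicator {z' | argminTie (fun p => g p z') = π} (fun _ => w π) z := by
  classical
  rw [Finset.sum_eq_single (argminTie fun p => g p z)]
  · exact (Set.indicator_of_mem rfl (fun _ => w (argminTie fun p => g p z))).symm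
  · intro b _ hb
    exact Set.indicator_of_notMem (fun h => hb (Eq.symm h)) _
  · simp

lemma integrable_argmin {α : Type*} [MeasurableSpace α] (μ : Measure α) [IsFiniteMeasure μ]
    (g : P → α → ℝ) (hg : ∀ p, Measurable (g p)) (w : P → ℝ) :
    Integrable (fun z => w (argminTie fun p => g p z)) μ := by
  have : (fun z => w (argminTie fun p => g p z)) =
      fun z => ∑ π : P, Set.indicator {z' | argminTie (fun p => g p z') = π} (fun _ => w π) z :=
    funext fun z => argmin_indicator g w z
  rw [this]
  exact integrable_finset_sum _ fun π _ =>
    (integrable_const (w π)).indicator (measurableSet_argminTie g hg π)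

lemma integral_argmin {α : Type*} [MeasurableSpace α] (μ : Measure α) [IsFiniteMeasure μ]
    (g : P → α → ℝ) (hg : ∀ p, Measurable (g p)) (w : P → ℝ) :
    ∫ z, w (argminTie fun p => g p z) ∂μ =
      ∑ π : P, (μ {z | argminTie (fun p => g p z) = π}).toReal * w π := by
  have h : (fun z => w (argminTie fun p => g p z)) =
      fun z => ∑ π : P, Set.indicator {z' | argminTie (fun p => g p z') = π} (fun _ => w π) z :=
    funext fun z => argmin_indicator g w z
  rw [h, integral_finset_sum _ fun π _ =>
    (integrable_const (w π)).indicator (measurableSet_argminTie g hg π)]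
  refine Finset.sum_congr rfl fun π _ => ?_
  rw [integral_indicator_const _ (measurableSet_argminTie g hg π), smul_eq_mul]
  rfl

end Argmin

lemma main_aux {ι : Type*} [Fintype ι] {P : Type*} [Fintype P] [Nonempty P] [LinearOrder P]
    {ε : ℝ} (hε : 0 < ε)
    (c c' : P → (ι → ℝ) → ℝ) (v : P → ℝ) (e : P → ι → ℝ)
    (hcm : ∀ p, Measurable (c p)) (hcm' : ∀ p, Measurable (c' p))
    (hv0 : ∀ p, 0 ≤ v p)
    (hsum : ∀ π, ∑ i, |e π i| = v π)
    (hshift : ∀ π p z, c p (z + e π) ≤ c' p z)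
    (heq : ∀ π z, c' π z = c π (z + e π)) :
    (∫ z, (v (argminTie fun p => c p z) - v (argminTie fun p => c' p z)) ∂laplacePi ι ε) ≤
      ε * ∫ z, (v (argminTie fun p => c p z)) ^ 2 ∂laplacePi ι ε := by
  classical
  haveI : IsProbabilityMeasure (laplacePi ι ε) := laplacePi_isProb hε
  set μ := laplacePi ι ε with hμ
  have hincl : ∀ π : P, (fun z => z + e π) ⁻¹' {z | argminTie (fun p => c p z) = π} ⊆
      {z | argminTie (fun p => c' p z) = π} := by
    intro π z hz
    exact argminTie_transfer _ _ π (fun p => hshift π p z) (heq π z) hz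
  have hm : ∀ π : P, ENNReal.ofReal (Real.exp (-ε * v π)) *
      μ {z | argminTie (fun p => c p z) = π} ≤ μ {z | argminTie (fun p => c' p z) = π} := by
    intro π
    calc ENNReal.ofReal (Real.exp (-ε * v π)) * μ {z | argminTie (fun p => c p z) = π}
        = ENNReal.ofReal (Real.exp (-ε * ∑ i, |e π i|)) *
            μ {z | argminTie (fun p => c p z) = π} := by rw [hsum]
      _ ≤ μ ((fun z => z + e π) ⁻¹' {z | argminTie (fun p => c p z) = π}) :=
          laplacePi_shift hε (e π) (measurableSet_argminTie c hcm π)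
      _ ≤ μ {z | argminTie (fun p => c' p z) = π} := measure_mono (hincl π)
  have hIf : Integrable (fun z => v (argminTie fun p => c p z)) μ :=
    integrable_argmin μ c hcm v
  have hIg : Integrable (fun z => v (argminTie fun p => c' p z)) μ :=
    integrable_argmin μ c' hcm' v
  have hsq : ∫ z, (v (argminTie fun p => c p z)) ^ 2 ∂μ =
      ∑ π : P, (μ {z | argminTie (fun p => c p z) = π}).toReal * (v π) ^ 2 :=
    integral_argmin μ c hcm (fun p => (v p) ^ 2)
  rw [integral_sub hIf hIg, integral_argmin μ c hcm v, integral_argmin μ c' hcm' v, hsq,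
    ← Finset.sum_sub_distrib, Finset.mul_sum]
  refine Finset.sum_le_sum fun π _ => ?_
  have haπ : (0:ℝ) ≤ (μ {z | argminTie (fun p => c p z) = π}).toReal := ENNReal.toReal_nonneg
  have hb : Real.exp (-ε * v π) * (μ {z | argminTie (fun p => c p z) = π}).toReal ≤
      (μ {z | argminTie (fun p => c' p z) = π}).toReal := by
    have h2 := ENNReal.toReal_mono (measure_ne_top μ _) (hm π)
    rwa [ENNReal.toReal_mul, ENNReal.toReal_ofReal (Real.exp_nonneg _)] at h2
  have hexp : 1 - ε * v π ≤ Real.exp (-ε * v π) := by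
    have h3 := Real.add_one_le_exp (-(ε * v π))
    rw [neg_mul]
    linarith
  have hb2 : (1 - ε * v π) * (μ {z | argminTie (fun p => c p z) = π}).toReal ≤
      (μ {z | argminTie (fun p => c' p z) = π}).toReal :=
    le_trans (mul_le_mul_of_nonneg_right hexp haπ) hb
  nlinarith [mul_le_mul_of_nonneg_right hb2 (hv0 π), hv0 π, haπ,
    ENNReal.toReal_nonneg (a := μ {z | argminTie (fun p => c' p z) = π})]

/-- **Multiplicative Stability for linear losses.** In the transductive
Context-FTPL setup with non-negative linear losses `ℓ^τ ∈ ℝ_{≥0}^K`, for any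
round `t < T`,
`E[⟨π^t(x^t), ℓ^t⟩ − ⟨π^{t+1}(x^t), ℓ^t⟩] ≤ ε · E[⟨π^t(x^t), ℓ^t⟩²]`,
where `π^t` (resp. `π^{t+1}`) is the tie-broken minimizer of the perturbed
cumulative loss over the first `t` (resp. `t+1`) rounds, under the same
i.i.d. Laplace(ε) perturbation draw. -/
theorem multiplicative_stability_linear
    {X P : Type*} [Fintype X] [Fintype P] [Nonempty P] [LinearOrder P]
    {K m d N : ℕ} (hK : 1 ≤ K) (hm : 1 ≤ m)
    (hd : Fintype.card X = d) (hN : Fintype.card P = N) (hN2 : 2 ≤ N)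
    (pol : P → X → Fin K → Bool)
    (hsparse : ∀ p x, (Finset.univ.filter fun j => pol p x j = true).card ≤ m)
    {ε : ℝ} (hε : 0 < ε)
    (T : ℕ) (xs : ℕ → X) (ℓ : ℕ → Fin K → ℝ) (hℓ : ∀ τ j, 0 ≤ ℓ τ j)
    (t : ℕ) (ht : t < T) :
    (∫ z, (dotp (pol (argminTie fun p : P =>
            (∑ τ ∈ Finset.range t, dotp (pol p (xs τ)) (ℓ τ)) +
              ∑ xc : X, dotp (pol p xc) fun j => z (xc, j)) (xs t)) (ℓ t) -
          dotp (pol (argminTie fun p : P =>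
            (∑ τ ∈ Finset.range (t + 1), dotp (pol p (xs τ)) (ℓ τ)) +
              ∑ xc : X, dotp (pol p xc) fun j => z (xc, j)) (xs t)) (ℓ t))
        ∂(laplacePi (X × Fin K) ε)) ≤
      ε * ∫ z, (dotp (pol (argminTie fun p : P =>
            (∑ τ ∈ Finset.range t, dotp (pol p (xs τ)) (ℓ τ)) +
              ∑ xc : X, dotp (pol p xc) fun j => z (xc, j)) (xs t)) (ℓ t)) ^ 2
        ∂(laplacePi (X × Fin K) ε) := by
  classical
  -- the perturbation shift associated to each policy
  set e : P → (X × Fin K) → ℝ := fun π i =>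
    if i.1 = xs t ∧ pol π (xs t) i.2 = true then ℓ t i.2 else 0 with he
  -- measurability of the cost functions
  have hdm : ∀ (s : ℕ) (p : P), Measurable (fun z : X × Fin K → ℝ =>
      (∑ τ ∈ Finset.range s, dotp (pol p (xs τ)) (ℓ τ)) +
        ∑ xc : X, dotp (pol p xc) fun j => z (xc, j)) := by
    intro s p
    refine measurable_const.add (Finset.measurable_sum _ fun x _ => ?_)
    unfold dotp
    refine Finset.measurable_sum _ fun j _ => ?_
    by_cases h : pol p x j = true
    · simpa [h] using measurable_pi_apply (x, j)
    · simp only [h, if_false]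
      exact measurable_const
  have hv0 : ∀ p : P, 0 ≤ dotp (pol p (xs t)) (ℓ t) := by
    intro p
    refine Finset.sum_nonneg fun j _ => ?_
    by_cases h : pol p (xs t) j = true <;> simp [h, hℓ t j]
  have hsum : ∀ π : P, ∑ i : X × Fin K, |e π i| = dotp (pol π (xs t)) (ℓ t) := by
    intro π
    rw [Fintype.sum_prod_type]
    rw [Finset.sum_eq_single (xs t)]
    · unfold dotp
      refine Finset.sum_congr rfl fun j _ => ?_
      by_cases h : pol π (xs t) j = true
      · simp [he, h, abs_of_nonneg (hℓ t j)]
      · simp [he, h]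
    · intro x _ hx
      refine Finset.sum_eq_zero fun j _ => ?_
      simp [he, hx]
    · simp
  -- the c-value at a shifted point
  have hce : ∀ (π p : P) (z : X × Fin K → ℝ),
      (∑ xc : X, dotp (pol p xc) fun j => (z + e π) (xc, j))
        = (∑ xc : X, dotp (pol p xc) fun j => z (xc, j))
          + dotp (pol p (xs t)) (fun j => if pol π (xs t) j = true then ℓ t j else 0) := by
    intro π p z
    have hsplit : ∀ xc : X, (dotp (pol p xc) fun j => (z + e π) (xc, j))
        = (dotp (pol p xc) fun j => z (xc, j)) + dotp (pol p xc) fun j => e π (xc, j) := by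
      intro xc
      unfold dotp
      rw [← Finset.sum_add_distrib]
      refine Finset.sum_congr rfl fun j _ => ?_
      by_cases h : pol p xc j = true <;> simp [h]
    rw [Finset.sum_congr rfl fun xc _ => hsplit xc, Finset.sum_add_distrib]
    congr 1
    rw [Finset.sum_eq_single (xs t)]
    · unfold dotp
      refine Finset.sum_congr rfl fun j _ => ?_
      by_cases h : pol p (xs t) j = true <;> simp [he, h]
    · intro x _ hx
      refine Finset.sum_eq_zero fun j _ => ?_
      by_cases h : pol p x j = true <;> simp [he, h, hx]
    · simp
  have htrunc_le : ∀ p π : P,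
      dotp (pol p (xs t)) (fun j => if pol π (xs t) j = true then ℓ t j else 0)
        ≤ dotp (pol p (xs t)) (ℓ t) := by
    intro p π
    refine Finset.sum_le_sum fun j _ => ?_
    by_cases h : pol p (xs t) j = true
    · simp only [h, if_true]
      by_cases h2 : pol π (xs t) j = true <;> simp [h2, hℓ t j]
    · simp [h]
  have htrunc_eq : ∀ π : P,
      dotp (pol π (xs t)) (fun j => if pol π (xs t) j = true then ℓ t j else 0)
        = dotp (pol π (xs t)) (ℓ t) := by
    intro π
    refine Finset.sum_congr rfl fun j _ => ?_
    by_cases h : pol π (xs t) j = true <;> simp [h]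
  exact main_aux hε
    (fun p z => (∑ τ ∈ Finset.range t, dotp (pol p (xs τ)) (ℓ τ)) +
        ∑ xc : X, dotp (pol p xc) fun j => z (xc, j))
    (fun p z => (∑ τ ∈ Finset.range (t + 1), dotp (pol p (xs τ)) (ℓ τ)) +
        ∑ xc : X, dotp (pol p xc) fun j => z (xc, j))
    (fun p => dotp (pol p (xs t)) (ℓ t)) e
    (hdm t) (hdm (t + 1)) hv0 hsum
    (by
      intro π p z
      beta_reduce
      rw [hce π p z, Finset.sum_range_succ]
      have := htrunc_le p π
      linarith)
    (by
      intro π z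
      beta_reduce
      rw [hce π π z, Finset.sum_range_succ, htrunc_eq π]
      ring)
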